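/- Let n ≥ 5, 1 ≤ p < q < n/2. The number of n-th roots of unity ζ with ζ^{p+q} = -1 or ζ^{q-p} = -1 equals: 0 if v₂(p+q) ≥ v₂(n) and v₂(q-p) ≥ v₂(n); gcd(n,p+q) if v₂(p+q) < v₂(n) ≤ v₂(q-p); gcd(n,q-p) if v₂(q-p) < v₂(n) ≤ v₂(p+q); gcd(n,p+q) + gcd(n,q-p) if v₂(p+q), v₂(q-p) < v₂(n) and v₂(p+q) ≠ v₂(q-p); and gcd(n,p+q) + gcd(n,q-p) − gcd(n,p+q,q-p) if v₂(p+q) = v₂(q-p) < v₂(n). -/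

import Mathlib

open Polynomial

private lemma val_le_of_dvd' {a b : ℕ} (hb : b ≠ 0) (h : a ∣ b) :
    padicValNat 2 a ≤ padicValNat 2 b := by
  have ha : a ≠ 0 := by rintro rfl; exact hb (Nat.zero_dvd.mp h)
  have hle := (Nat.factorization_le_iff_dvd ha hb).mpr h
  have h2 := Finsupp.le_def.mp hle 2
  rwa [Nat.factorization_def a Nat.prime_two, Nat.factorization_def b Nat.prime_two] at h2

private lemma val_gcd' {a b : ℕ} (ha : a ≠ 0) (hb : b ≠ 0) :
    padicValNat 2 (Nat.gcd a b) = min (padicValNat 2 a) (padicValNat 2 b) := by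
  have h := Nat.factorization_gcd ha hb
  have h2 : (Nat.gcd a b).factorization 2 = a.factorization 2 ⊓ b.factorization 2 := by
    rw [h, Finsupp.inf_apply]
  rwa [Nat.factorization_def _ Nat.prime_two, Nat.factorization_def _ Nat.prime_two,
    Nat.factorization_def _ Nat.prime_two] at h2

private lemma dvd_of_val' {d m : ℕ} (hm : m ≠ 0) (h : d ∣ 2 * m)
    (hv : padicValNat 2 d ≤ padicValNat 2 m) : d ∣ m := by
  have hd : d ≠ 0 := by rintro rfl; exact hm (by simpa using Nat.zero_dvd.mp h)
  rw [← Nat.factorization_le_iff_dvd hd hm]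
  have hle := (Nat.factorization_le_iff_dvd hd (by simp [hm] : 2 * m ≠ 0)).mpr h
  refine Finsupp.le_def.mpr fun p => ?_
  by_cases hp : p = 2
  · subst hp
    rw [Nat.factorization_def d Nat.prime_two, Nat.factorization_def m Nat.prime_two]
    exact hv
  · have := Finsupp.le_def.mp hle p
    rwa [Nat.factorization_mul two_ne_zero hm, Finsupp.add_apply,
      Nat.Prime.factorization Nat.prime_two, Finsupp.single_apply, if_neg (Ne.symm hp),
      zero_add] at this

private lemma pow_gcd_eq_one' {ζ : ℂ} {a b : ℕ} (ha : ζ ^ a = 1) (hb : ζ ^ b = 1) :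
    ζ ^ Nat.gcd a b = 1 :=
  orderOf_dvd_iff_pow_eq_one.mp
    (Nat.dvd_gcd (orderOf_dvd_of_pow_eq_one ha) (orderOf_dvd_of_pow_eq_one hb))

private lemma exists_eta' {n m : ℕ} (hn : n ≠ 0) (hm : m ≠ 0)
    (h : padicValNat 2 m < padicValNat 2 n) : ∃ η : ℂ, η ^ n = 1 ∧ η ^ m = -1 := by
  set v := padicValNat 2 m with hv
  obtain ⟨k, hk⟩ : 2 ^ (v + 1) ∣ n := (pow_dvd_pow 2 h).trans pow_padicValNat_dvd
  have hω := Complex.isPrimitiveRoot_exp n hn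
  set ω := Complex.exp (2 * Real.pi * Complex.I / n) with hωdef
  obtain ⟨m', hm'⟩ : 2 ^ v ∣ m := pow_padicValNat_dvd
  have hm'odd : ¬ 2 ∣ m' := by
    rintro ⟨t, rfl⟩
    have h2 : 2 ^ (v + 1) ∣ m := ⟨t, by rw [hm']; ring⟩
    have := val_le_of_dvd' hm h2
    have hvp : padicValNat 2 (2 ^ (v + 1)) = v + 1 := by
      simp [padicValNat.prime_pow]
    omega
  have hkm2 : k * (m * 2) = n * m' := by rw [hm', hk]; ring
  refine ⟨ω ^ k, ?_, ?_⟩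
  · rw [← pow_mul, mul_comm, pow_mul, hω.pow_eq_one, one_pow]
  · have hsq : ((ω ^ k) ^ m) ^ 2 = 1 := by
      rw [← pow_mul, ← pow_mul, hkm2, pow_mul, hω.pow_eq_one, one_pow]
    have hne : (ω ^ k) ^ m ≠ 1 := by
      rw [← pow_mul]
      intro hone
      obtain ⟨t, ht⟩ := (hω.pow_eq_one_iff_dvd _).mp hone
      have : n * m' = n * (2 * t) := by rw [← hkm2, show k*(m*2) = k*m*2 from by ring, ht]; ring
      exact hm'odd ⟨t, Nat.eq_of_mul_eq_mul_left (Nat.pos_of_ne_zero hn) this⟩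
    rcases sq_eq_one_iff.mp hsq with h1 | h1
    · exact absurd h1 hne
    · exact h1

private lemma odd_quot' {a g c : ℕ} (ha : a ≠ 0) (heq : a = g * c)
    (hv : padicValNat 2 a ≤ padicValNat 2 g) : ¬ 2 ∣ c := by
  rintro ⟨t, rfl⟩
  have hg0 : g ≠ 0 := by rintro rfl; rw [zero_mul] at heq; exact ha heq
  have h2g : 2 * g ∣ a := ⟨t, by rw [heq]; ring⟩
  have h1 := val_le_of_dvd' ha h2g
  rw [padicValNat.mul two_ne_zero hg0, padicValNat.self one_lt_two] at h1
  omega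

private lemma zmod_one_of_not_two_dvd {k : ℕ} (h : ¬ 2 ∣ k) : (k : ZMod 2) = 1 := by
  have h0 : (k : ZMod 2) ≠ 0 := by
    rw [Ne, ZMod.natCast_eq_zero_iff]; exact h
  have hall : ∀ z : ZMod 2, z ≠ 0 → z = 1 := by decide
  exact hall _ h0

private lemma card_filter' (n m : ℕ) (hn : n ≠ 0) (hm : m ≠ 0) :
    ((nthRootsFinset n (1 : ℂ)).filter fun ζ => ζ ^ m = -1).card =
      if padicValNat 2 m < padicValNat 2 n then Nat.gcd n m else 0 := by
  have hnpos : 0 < n := Nat.pos_of_ne_zero hn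
  split_ifs with h
  · obtain ⟨η, hηn, hηm⟩ := exists_eta' hn hm h
    have hη0 : η ≠ 0 := by
      intro h0; rw [h0, zero_pow hn] at hηn; exact zero_ne_one hηn
    have hd0 : Nat.gcd n m ≠ 0 := fun hh => hn (Nat.eq_zero_of_gcd_eq_zero_left hh)
    have hdpos : 0 < Nat.gcd n m := Nat.pos_of_ne_zero hd0
    rw [← (Complex.isPrimitiveRoot_exp _ hd0).card_nthRootsFinset]
    apply Finset.card_nbij' (i := fun ξ => η⁻¹ * ξ) (j := fun ζ => η * ζ)
    · intro ξ hξ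
      rw [Finset.mem_coe, Finset.mem_filter, mem_nthRootsFinset hnpos] at hξ
      obtain ⟨hξn, hξm⟩ := hξ
      rw [Finset.mem_coe, mem_nthRootsFinset hdpos]
      apply pow_gcd_eq_one'
      · rw [mul_pow, inv_pow, hηn, hξn, inv_one, one_mul]
      · rw [mul_pow, inv_pow, hηm, hξm]; norm_num
    · intro ζ hζ
      rw [Finset.mem_coe, mem_nthRootsFinset hdpos] at hζ
      rw [Finset.mem_coe, Finset.mem_filter, mem_nthRootsFinset hnpos]
      obtain ⟨c, hc⟩ := Nat.gcd_dvd_left n m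
      obtain ⟨c', hc'⟩ := Nat.gcd_dvd_right n m
      constructor
      · rw [mul_pow, hηn, hc, pow_mul, hζ, one_pow, mul_one]
      · rw [mul_pow, hηm, hc', pow_mul, hζ, one_pow, mul_one]
    · intro ξ hξ; field_simp
    · intro ζ hζ; field_simp
  · rw [Finset.card_eq_zero, Finset.filter_eq_empty_iff]
    intro ζ hζ hcon
    rw [mem_nthRootsFinset hnpos] at hζ
    have h2m : ζ ^ (2 * m) = 1 := by
      rw [two_mul, pow_add, hcon]; norm_num
    have hdm : Nat.gcd n (2 * m) ∣ m := by
      refine dvd_of_val' hm (Nat.gcd_dvd_right _ _) ?_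
      exact le_trans (val_le_of_dvd' hn (Nat.gcd_dvd_left _ _)) (not_lt.mp h)
    obtain ⟨c, hc⟩ := hdm
    have hgd : ζ ^ Nat.gcd n (2 * m) = 1 := pow_gcd_eq_one' hζ h2m
    rw [hc, pow_mul, hgd, one_pow] at hcon
    norm_num at hcon

private lemma filter_inter_eq' (n a b : ℕ) (hn : n ≠ 0) (ha : a ≠ 0) (hb : b ≠ 0)
    (hveq : padicValNat 2 a = padicValNat 2 b) :
    ((nthRootsFinset n (1 : ℂ)).filter fun ζ => ζ ^ a = -1) ∩
      ((nthRootsFinset n (1 : ℂ)).filter fun ζ => ζ ^ b = -1) =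
      (nthRootsFinset n (1 : ℂ)).filter fun ζ => ζ ^ Nat.gcd a b = -1 := by
  have hnpos : 0 < n := Nat.pos_of_ne_zero hn
  have hg0 : Nat.gcd a b ≠ 0 := fun hh => ha (Nat.eq_zero_of_gcd_eq_zero_left hh)
  have hvg : padicValNat 2 (Nat.gcd a b) = padicValNat 2 a := by
    rw [val_gcd' ha hb, hveq, min_self]
  ext ζ
  simp only [Finset.mem_inter, Finset.mem_filter]
  constructor
  · rintro ⟨⟨hζ, hζa⟩, ⟨-, hζb⟩⟩
    refine ⟨hζ, ?_⟩
    have hζ0 : ζ ≠ 0 := ne_zero_of_mem_nthRootsFinset one_ne_zero hζ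
    set x := Nat.gcdA a b with hx
    set y := Nat.gcdB a b with hy
    have hbez : (Nat.gcd a b : ℤ) = a * x + b * y := Nat.gcd_eq_gcd_ab a b
    obtain ⟨a', hA⟩ : 2 ^ padicValNat 2 a ∣ a := pow_padicValNat_dvd
    obtain ⟨b', hB⟩ : 2 ^ padicValNat 2 a ∣ b := by
      rw [hveq]; exact pow_padicValNat_dvd
    obtain ⟨g', hG⟩ : 2 ^ padicValNat 2 a ∣ Nat.gcd a b := by
      rw [← hvg]; exact pow_padicValNat_dvd
    set v := padicValNat 2 a with hvdef
    have hodda : ¬ 2 ∣ a' := odd_quot' ha hA (by rw [padicValNat.prime_pow])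
    have hoddb : ¬ 2 ∣ b' := odd_quot' hb hB (by rw [padicValNat.prime_pow, hveq])
    have hoddg : ¬ 2 ∣ g' := odd_quot' hg0 hG (by rw [padicValNat.prime_pow, hvg])
    have hbez' : (g' : ℤ) = a' * x + b' * y := by
      have h2 : ((2:ℤ) ^ v) * g' = ((2:ℤ)^v) * (a' * x + b' * y) := by
        rw [hG, hA, hB] at hbez
        push_cast at hbez ⊢
        linarith [hbez]
      exact mul_left_cancel₀ (by positivity) h2
    have hparity : Odd (x + y) := by
      have hz : ((x + y : ℤ) : ZMod 2) = 1 := by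
        have hcast := congrArg (fun t : ℤ => (t : ZMod 2)) hbez'
        push_cast at hcast
        rw [zmod_one_of_not_two_dvd hodda, zmod_one_of_not_two_dvd hoddb,
          zmod_one_of_not_two_dvd hoddg, one_mul, one_mul] at hcast
        push_cast
        exact hcast.symm
      rcases Int.even_or_odd (x + y) with he | ho
      · exfalso
        obtain ⟨t, ht⟩ := he
        rw [ht] at hz
        push_cast at hz
        rw [← two_mul] at hz
        have h20 : (2 : ZMod 2) = 0 := by decide
        rw [h20, zero_mul] at hz
        exact absurd hz (by decide)
      · exact ho
    have hkey : (ζ : ℂ) ^ (Nat.gcd a b : ℤ) = (-1 : ℂ) ^ (x + y) := by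
      rw [hbez, zpow_add₀ hζ0, zpow_mul, zpow_mul, zpow_natCast, zpow_natCast, hζa, hζb,
        ← zpow_add₀ (by norm_num : (-1:ℂ) ≠ 0)]
    rw [zpow_natCast] at hkey
    rw [hkey, hparity.neg_one_zpow]
  · rintro ⟨hζ, hζg⟩
    have step : ∀ c : ℕ, c ≠ 0 → Nat.gcd a b ∣ c → padicValNat 2 c = padicValNat 2 a →
        ζ ^ c = -1 := by
      intro c hc0 hdvd hvc
      obtain ⟨e, he⟩ := hdvd
      have hodd : ¬ 2 ∣ e := odd_quot' hc0 he (by rw [hvc, hvg])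
      have hodd' : Odd e := Nat.odd_iff.mpr (by omega)
      rw [he, pow_mul, hζg, hodd'.neg_one_pow]
    exact ⟨⟨hζ, step a ha (Nat.gcd_dvd_left a b) rfl⟩,
      ⟨hζ, step b hb (Nat.gcd_dvd_right a b) hveq.symm⟩⟩

private lemma filter_inter_empty' (n a b : ℕ) (hn : n ≠ 0) (ha : a ≠ 0) (hb : b ≠ 0)
    (hv : padicValNat 2 a < padicValNat 2 b) :
    ((nthRootsFinset n (1 : ℂ)).filter fun ζ => ζ ^ a = -1) ∩
      ((nthRootsFinset n (1 : ℂ)).filter fun ζ => ζ ^ b = -1) = ∅ := by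
  have hnpos : 0 < n := Nat.pos_of_ne_zero hn
  have hg0 : Nat.gcd a b ≠ 0 := fun hh => ha (Nat.eq_zero_of_gcd_eq_zero_left hh)
  rw [Finset.eq_empty_iff_forall_notMem]
  intro ζ hmem
  rw [Finset.mem_inter, Finset.mem_filter, Finset.mem_filter,
    mem_nthRootsFinset hnpos] at hmem
  obtain ⟨⟨hζn, hζa⟩, -, hζb⟩ := hmem
  have h2a : ζ ^ (2 * a) = 1 := by rw [two_mul, pow_add, hζa]; norm_num
  have h2b : ζ ^ (2 * b) = 1 := by rw [two_mul, pow_add, hζb]; norm_num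
  have hgg : ζ ^ (2 * Nat.gcd a b) = 1 := by
    have := pow_gcd_eq_one' h2a h2b
    rwa [Nat.gcd_mul_left] at this
  have hdvd : 2 * Nat.gcd a b ∣ b := by
    refine dvd_of_val' hb (mul_dvd_mul_left 2 (Nat.gcd_dvd_right a b)) ?_
    rw [padicValNat.mul two_ne_zero hg0, padicValNat.self one_lt_two, val_gcd' ha hb]
    omega
  obtain ⟨c, hc⟩ := hdvd
  rw [hc, pow_mul, hgg, one_pow] at hζb
  norm_num at hζb

theorem stmt_10 (n p q : ℕ) (hn : 5 ≤ n) (hp : 1 ≤ p) (hpq : p < q) (hq : 2 * q < n) :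
    let N := {ζ : ℂ | ζ ^ n = 1 ∧ (ζ ^ (p + q) = -1 ∨ ζ ^ (q - p) = -1)}.ncard
    let v1 := padicValNat 2 (p + q)
    let v2 := padicValNat 2 (q - p)
    let v3 := padicValNat 2 n
    (v3 ≤ v1 ∧ v3 ≤ v2 → N = 0) ∧
    (v1 < v3 ∧ v3 ≤ v2 → N = Nat.gcd n (p + q)) ∧
    (v3 ≤ v1 ∧ v2 < v3 → N = Nat.gcd n (q - p)) ∧
    (v1 < v3 ∧ v2 < v3 ∧ v1 ≠ v2 → N = Nat.gcd n (p + q) + Nat.gcd n (q - p)) ∧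
    (v1 < v3 ∧ v2 < v3 ∧ v1 = v2 →
      N = Nat.gcd n (p + q) + Nat.gcd n (q - p) - Nat.gcd n (Nat.gcd (p + q) (q - p))) := by
  intro N v1 v2 v3
  have hn0 : n ≠ 0 := by omega
  have hnpos : 0 < n := by omega
  have ha0 : p + q ≠ 0 := by omega
  have hb0 : q - p ≠ 0 := by omega
  set S1 := (nthRootsFinset n (1 : ℂ)).filter (fun ζ => ζ ^ (p + q) = -1) with hS1
  set S2 := (nthRootsFinset n (1 : ℂ)).filter (fun ζ => ζ ^ (q - p) = -1) with hS2
  have hNcard : N = (S1 ∪ S2).card := by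
    have hset : {ζ : ℂ | ζ ^ n = 1 ∧ (ζ ^ (p + q) = -1 ∨ ζ ^ (q - p) = -1)} =
        ↑(S1 ∪ S2) := by
      ext ζ
      simp only [Set.mem_setOf_eq, Finset.coe_union, Set.mem_union, Finset.mem_coe, hS1, hS2,
        Finset.mem_filter, mem_nthRootsFinset hnpos]
      tauto
    show {ζ : ℂ | ζ ^ n = 1 ∧ (ζ ^ (p + q) = -1 ∨ ζ ^ (q - p) = -1)}.ncard = _
    rw [hset, Set.ncard_coe_finset]
  have hC1 := card_filter' n (p + q) hn0 ha0
  have hC2 := card_filter' n (q - p) hn0 hb0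
  have hUI := Finset.card_union_add_card_inter S1 S2
  rw [← hS1] at hC1
  rw [← hS2] at hC2
  refine ⟨?_, ?_, ?_, ?_, ?_⟩
  · rintro ⟨h1, h2⟩
    rw [if_neg (not_lt.mpr h1)] at hC1
    rw [if_neg (not_lt.mpr h2)] at hC2
    rw [hNcard]
    omega
  · rintro ⟨h1, h2⟩
    rw [if_pos h1] at hC1
    rw [if_neg (not_lt.mpr h2)] at hC2
    rw [hNcard, Finset.card_eq_zero.mp hC2, Finset.union_empty]
    exact hC1
  · rintro ⟨h1, h2⟩
    rw [if_neg (not_lt.mpr h1)] at hC1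
    rw [if_pos h2] at hC2
    rw [hNcard, Finset.card_eq_zero.mp hC1, Finset.empty_union]
    exact hC2
  · rintro ⟨h1, h2, hne⟩
    rw [if_pos h1] at hC1
    rw [if_pos h2] at hC2
    have hI : S1 ∩ S2 = ∅ := by
      rcases lt_or_gt_of_ne hne with hlt | hgt
      · exact filter_inter_empty' n (p + q) (q - p) hn0 ha0 hb0 hlt
      · rw [Finset.inter_comm]
        exact filter_inter_empty' n (q - p) (p + q) hn0 hb0 ha0 hgt
    rw [hI, Finset.card_empty] at hUI
    rw [hNcard]
    omega
  · rintro ⟨h1, h2, heq⟩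
    rw [if_pos h1] at hC1
    rw [if_pos h2] at hC2
    have hg0 : Nat.gcd (p + q) (q - p) ≠ 0 := fun hh => ha0 (Nat.eq_zero_of_gcd_eq_zero_left hh)
    have hI : S1 ∩ S2 = (nthRootsFinset n (1 : ℂ)).filter
        (fun ζ => ζ ^ Nat.gcd (p + q) (q - p) = -1) :=
      filter_inter_eq' n (p + q) (q - p) hn0 ha0 hb0 heq
    have hCg := card_filter' n (Nat.gcd (p + q) (q - p)) hn0 hg0
    rw [if_pos (by rw [val_gcd' ha0 hb0]; omega)] at hCg
    rw [hI, hCg] at hUI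
    rw [hNcard]
    omega
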